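/- Let k ≥ 0 and t ≥ 1 be integers, let s ∈ {0,1,2}, let G be a graph, and let γ be a drawing of G with at most k crossings which contains an s-nest of size (k+1)(t−1)+1. Then γ has a clean s-nest of size t. -/
import Mathlib


open Set Bornology

noncomputable section

namespace CrossingPaper

/-- Points of the plane. -/
abbrev Plane : Type := ℝ × ℝ

/-- A drawing of a (simple) graph `G` in the plane: each vertex is mapped to a point
(injectively), and each edge `e = uv` is mapped to an arc with ends `vmap u`, `vmap v`
whose interior `emap e` avoids all vertex images; any two distinct edges intersect in
finitely many points. -/
structure Drawing {V : Type} (G : SimpleGraph V) where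
  vmap : V → Plane
  emap : Sym2 V → Set Plane
  vmap_inj : Function.Injective vmap
  arc : ∀ e ∈ G.edgeSet, ∀ u v : V, e = s(u, v) →
    ∃ f : ℝ → Plane, ContinuousOn f (Icc 0 1) ∧ InjOn f (Icc 0 1) ∧
      f 0 = vmap u ∧ f 1 = vmap v ∧ emap e = f '' Ioo 0 1
  avoid : ∀ e ∈ G.edgeSet, ∀ v : V, vmap v ∉ emap e
  finite_inter : ∀ e ∈ G.edgeSet, ∀ e' ∈ G.edgeSet, e ≠ e' → (emap e ∩ emap e').Finite

variable {V : Type} {G : SimpleGraph V}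

/-- The set of crossings of a drawing: points lying on (the interiors of) two distinct
edges. -/
def Drawing.crossings (γ : Drawing G) : Set Plane :=
  {p | ∃ e ∈ G.edgeSet, ∃ e' ∈ G.edgeSet, e ≠ e' ∧ p ∈ γ.emap e ∧ p ∈ γ.emap e'}

/-- The crossing number of a graph: the minimum number of crossings over all drawings. -/
def crossingNumber (G : SimpleGraph V) : ℕ :=
  sInf {n | ∃ γ : Drawing G, γ.crossings.Finite ∧ γ.crossings.ncard = n}

/-- `G` is `k`-crossing-critical: `cr(G) ≥ k` and `cr(G - e) < k` for every edge `e`. -/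
def CrossingCritical (G : SimpleGraph V) (k : ℕ) : Prop :=
  k ≤ crossingNumber G ∧
    ∀ e ∈ G.edgeSet, crossingNumber (G.deleteEdges {e}) < k

/-- The image of a subgraph under a drawing. -/
def Drawing.image (γ : Drawing G) (H : G.Subgraph) : Set Plane :=
  γ.vmap '' H.verts ∪ ⋃ e ∈ H.edgeSet, γ.emap e

/-- The image of a whole drawing. -/
def Drawing.totalImage (γ : Drawing G) : Set Plane :=
  range γ.vmap ∪ ⋃ e ∈ G.edgeSet, γ.emap e

/-- The union of all bounded complementary components of a set in the plane: for a
Jordan curve this is the open disk bounded by the curve. -/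
def boundedSide (s : Set Plane) : Set Plane :=
  {p | p ∉ s ∧ IsBounded (connectedComponentIn sᶜ p)}

/-- For a Jordan curve, the closed disk bounded by the curve. -/
def closedRegion (s : Set Plane) : Set Plane :=
  s ∪ boundedSide s

/-- A subgraph is a cycle: connected, finite, and every vertex has exactly two
neighbours. -/
def IsCycleSubgraph (H : G.Subgraph) : Prop :=
  H.Connected ∧ H.verts.Finite ∧ ∀ v ∈ H.verts, (H.neighborSet v).ncard = 2

/-- A subgraph is crossing-free in a drawing if none of its edges is crossed by
another edge of `G`. -/
def Drawing.CrossingFree (γ : Drawing G) (H : G.Subgraph) : Prop :=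
  ∀ e ∈ H.edgeSet, ∀ e' ∈ G.edgeSet, e ≠ e' → γ.emap e ∩ γ.emap e' = ∅

/-- A sequence of cycles `C 0, …, C (t-1)` is a nest in `γ`: the cycles are pairwise
edge-disjoint, each is crossing-free in `γ`, and the image of each cycle is contained
in the closed disk bounded by the image of the previous one. -/
def Drawing.IsNest (γ : Drawing G) {t : ℕ} (C : Fin t → G.Subgraph) : Prop :=
  (∀ i, IsCycleSubgraph (C i)) ∧
  (∀ i j, i ≠ j → Disjoint (C i).edgeSet (C j).edgeSet) ∧
  (∀ i, γ.CrossingFree (C i)) ∧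
  (∀ i : ℕ, ∀ h : i + 1 < t,
    γ.image (C ⟨i + 1, h⟩) ⊆ closedRegion (γ.image (C ⟨i, by omega⟩)))

/-- An `s`-nest: a nest such that any two distinct cycles intersect exactly in a fixed
set `X` of `s` vertices. -/
def Drawing.IsSNest (γ : Drawing G) (s : ℕ) {t : ℕ} (C : Fin t → G.Subgraph) : Prop :=
  γ.IsNest C ∧ ∃ X : Set V, X.Finite ∧ X.ncard = s ∧
    ∀ i j, i ≠ j → (C i).verts ∩ (C j).verts = X

/-- A nest `C 0, …, C (t-1)` in `γ` is clean if every crossing of `γ` lies either in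
the open disk bounded by the image of the last cycle or outside the closed disk
bounded by the image of the first cycle. -/
def Drawing.IsCleanNest (γ : Drawing G) {t : ℕ} (C : Fin t → G.Subgraph) : Prop :=
  ∀ h : 0 < t, ∀ p ∈ γ.crossings,
    p ∈ boundedSide (γ.image (C ⟨t - 1, by omega⟩)) ∨
      p ∉ closedRegion (γ.image (C ⟨0, h⟩))

/-- A drawing is generic: no point lies on three distinct edges, and no two adjacent
edges cross. -/
def Drawing.Generic (γ : Drawing G) : Prop :=
  (∀ p : Plane, ∀ e₁ ∈ G.edgeSet, ∀ e₂ ∈ G.edgeSet, ∀ e₃ ∈ G.edgeSet,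
    p ∈ γ.emap e₁ → p ∈ γ.emap e₂ → p ∈ γ.emap e₃ → e₁ = e₂ ∨ e₁ = e₃ ∨ e₂ = e₃) ∧
  (∀ e ∈ G.edgeSet, ∀ e' ∈ G.edgeSet, e ≠ e' → (∃ v : V, v ∈ e ∧ v ∈ e') →
    γ.emap e ∩ γ.emap e' = ∅)

/-- The faces of a (crossing-free) drawing: the connected components of the complement
of its image. -/
def Drawing.faces (γ : Drawing G) : Set (Set Plane) :=
  {F | ∃ x, x ∉ γ.totalImage ∧ F = connectedComponentIn γ.totalImageᶜ x}

/-- The length of (the boundary of) a face: the number of edges of the graph drawn on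
its frontier. -/
def Drawing.faceLength (γ : Drawing G) (F : Set Plane) : ℕ :=
  {e | e ∈ G.edgeSet ∧ γ.emap e ⊆ frontier F}.ncard

/-- A drawing is a plane triangulation if it has no crossings and every face (including
the outer face) is bounded by a triangle of the graph. -/
def Drawing.IsPlaneTriangulation (γ : Drawing G) : Prop :=
  γ.crossings = ∅ ∧
  ∀ F ∈ γ.faces, ∃ T : G.Subgraph, IsCycleSubgraph T ∧ T.verts.ncard = 3 ∧
    frontier F = γ.image T


lemma closedRegion_mono {A B : Set Plane} (h : A ⊆ closedRegion B) :
    closedRegion A ⊆ closedRegion B := by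
  intro p hp
  rcases hp with hpA | ⟨hpA, hbd⟩
  · exact h hpA
  · by_contra hpB
    have hpB' : p ∉ B := fun hB => hpB (Or.inl hB)
    have hK : ¬ IsBounded (connectedComponentIn Bᶜ p) := by
      intro hb; exact hpB (Or.inr ⟨hpB', hb⟩)
    have hKA : connectedComponentIn Bᶜ p ⊆ Aᶜ := by
      intro q hq hqA
      have hqB : q ∈ Bᶜ := connectedComponentIn_subset _ _ hq
      rcases h hqA with hqB' | ⟨_, hqbd⟩
      · exact hqB hqB'
      · have heq := connectedComponentIn_eq hq
        exact hK (by rw [heq]; exact hqbd)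
    have hsub : connectedComponentIn Bᶜ p ⊆ connectedComponentIn Aᶜ p :=
      (isPreconnected_connectedComponentIn).subset_connectedComponentIn
        (mem_connectedComponentIn hpB') hKA
    exact hK (hbd.subset hsub)

lemma crossing_not_mem_image {V : Type} {G : SimpleGraph V} (γ : Drawing G)
    {H : G.Subgraph} (hfree : γ.CrossingFree H) {p : Plane}
    (hp : p ∈ γ.crossings) : p ∉ γ.image H := by
  obtain ⟨e, he, e', he', hne, hpe, hpe'⟩ := hp
  intro hmem
  simp only [Drawing.image, Set.mem_union, Set.mem_iUnion] at hmem
  rcases hmem with ⟨v, hv, hvp⟩ | ⟨e'', he'', hpe''⟩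
  · exact γ.avoid e he v (hvp ▸ hpe)
  · by_cases h : e'' = e
    · have hne2 : e'' ≠ e' := h ▸ hne
      have h0 := hfree e'' he'' e' he' hne2
      have : p ∈ γ.emap e'' ∩ γ.emap e' := ⟨hpe'', hpe'⟩
      rw [h0] at this; exact this
    · have h0 := hfree e'' he'' e he h
      have : p ∈ γ.emap e'' ∩ γ.emap e := ⟨hpe'', hpe⟩
      rw [h0] at this; exact this

/-- **Lemma 5 of the paper.** Let `k ≥ 0` and `t ≥ 1` be integers, let
`s ∈ {0,1,2}`, and let `γ` be a drawing of a graph `G` with at most `k` crossings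
containing an `s`-nest of size `(k+1)(t−1)+1`. Then `γ` has a clean `s`-nest of size
`t`. -/
theorem statement4 {V : Type} {G : SimpleGraph V} (k t : ℕ) (ht : 1 ≤ t)
    (s : ℕ) (hs : s ∈ ({0, 1, 2} : Set ℕ)) (γ : Drawing G)
    (hfin : γ.crossings.Finite) (hcr : γ.crossings.ncard ≤ k)
    (C : Fin ((k + 1) * (t - 1) + 1) → G.Subgraph) (hC : γ.IsSNest s C) :
    ∃ C' : Fin t → G.Subgraph, γ.IsSNest s C' ∧ γ.IsCleanNest C' := by
  classical
  obtain ⟨⟨hcyc, hdisj, hfree, hnest⟩, X, hXf, hXc, hX⟩ := hC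
  -- monotonicity of the closed regions along the nest
  have key : ∀ i jn : ℕ, ∀ hij : i ≤ jn, ∀ hj : jn < (k + 1) * (t - 1) + 1,
      closedRegion (γ.image (C ⟨jn, hj⟩)) ⊆
        closedRegion (γ.image (C ⟨i, lt_of_le_of_lt hij hj⟩)) := by
    intro i jn
    induction jn with
    | zero =>
      intro hij hj
      have : i = 0 := Nat.le_zero.mp hij
      subst this
      exact subset_rfl
    | succ jn ih =>
      intro hij hj
      rcases Nat.eq_or_lt_of_le hij with he | hlt
      · subst he; exact subset_rfl
      · have h1 : i ≤ jn := Nat.lt_succ_iff.mp hlt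
        have h2 : jn < (k + 1) * (t - 1) + 1 := Nat.lt_of_succ_lt hj
        exact (closedRegion_mono (hnest jn hj)).trans (ih h1 h2)
  -- crossings avoid the cycle images
  have step : ∀ (m : Fin ((k + 1) * (t - 1) + 1)) (p : Plane), p ∈ γ.crossings →
      p ∈ closedRegion (γ.image (C m)) → p ∈ boundedSide (γ.image (C m)) := by
    intro m p hp hcl
    rcases hcl with h | h
    · exact absurd h (crossing_not_mem_image γ (hfree m) hp)
    · exact h
  -- window bounds
  have hbound : ∀ jj : Fin (k + 1),
      jj.val * (t - 1) + (t - 1) < (k + 1) * (t - 1) + 1 := by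
    intro jj
    have h1 : jj.val ≤ k := Nat.lt_succ_iff.mp jj.isLt
    calc jj.val * (t - 1) + (t - 1) ≤ k * (t - 1) + (t - 1) :=
          Nat.add_le_add_right (Nat.mul_le_mul_right _ h1) _
      _ = (k + 1) * (t - 1) := (Nat.succ_mul _ _).symm
      _ < (k + 1) * (t - 1) + 1 := Nat.lt_succ_self _
  -- pigeonhole: some window is not blocked by any crossing
  have pig : ∃ a : ℕ, ∃ haN : a + (t - 1) < (k + 1) * (t - 1) + 1,
      ∀ p ∈ γ.crossings,
        p ∈ closedRegion (γ.image (C ⟨a,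
            Nat.lt_of_le_of_lt (Nat.le_add_right a (t - 1)) haN⟩)) →
        p ∈ boundedSide (γ.image (C ⟨a + (t - 1), haN⟩)) := by
    by_contra hno
    push_neg at hno
    have h' : ∀ jj : Fin (k + 1), ∃ p ∈ γ.crossings,
        p ∈ closedRegion (γ.image (C ⟨jj.val * (t - 1),
            Nat.lt_of_le_of_lt (Nat.le_add_right _ (t - 1)) (hbound jj)⟩)) ∧
        p ∉ boundedSide (γ.image (C ⟨jj.val * (t - 1) + (t - 1), hbound jj⟩)) :=
      fun jj => hno (jj.val * (t - 1)) (hbound jj)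
    choose p hp1 hp2 hp3 using h'
    have aux : ∀ jj jj' : Fin (k + 1), jj < jj' → p jj ≠ p jj' := by
      intro jj jj' hlt heq
      have hle : jj.val * (t - 1) + (t - 1) ≤ jj'.val * (t - 1) := by
        calc jj.val * (t - 1) + (t - 1) = (jj.val + 1) * (t - 1) :=
              (Nat.succ_mul _ _).symm
          _ ≤ jj'.val * (t - 1) := Nat.mul_le_mul_right _ hlt
      have h1 : p jj' ∈ closedRegion
          (γ.image (C ⟨jj.val * (t - 1) + (t - 1), hbound jj⟩)) :=
        key _ _ hle _ (hp2 jj')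
      have h2 : p jj ∈ boundedSide
          (γ.image (C ⟨jj.val * (t - 1) + (t - 1), hbound jj⟩)) := by
        rw [heq]; exact step _ _ (hp1 jj') h1
      exact hp3 jj h2
    have hinj : Function.Injective p := by
      intro jj jj' he
      rcases lt_trichotomy jj jj' with h | h | h
      · exact absurd he (aux _ _ h)
      · exact h
      · exact absurd he.symm (aux _ _ h)
    have hsub : Set.range p ⊆ γ.crossings := Set.range_subset_iff.mpr hp1
    have hcard : (Set.range p).ncard = k + 1 := by
      rw [← Set.image_univ, Set.ncard_image_of_injective _ hinj, Set.ncard_univ]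
      simp
    have hle := Set.ncard_le_ncard hsub hfin
    omega
  obtain ⟨a, haN, hclean⟩ := pig
  -- the clean window
  refine ⟨fun i => C ⟨a + i.val,
      Nat.lt_of_le_of_lt (Nat.add_le_add_left (Nat.le_pred_of_lt i.isLt) a) haN⟩,
    ⟨⟨fun i => hcyc _, ?_, fun i => hfree _, ?_⟩, X, hXf, hXc, ?_⟩, ?_⟩
  · intro i i' hne
    refine hdisj _ _ (fun hh => hne ?_)
    have h2 : a + i.val = a + i'.val := congrArg Fin.val hh
    exact Fin.ext (by omega)
  · intro i h
    exact hnest (a + i)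
      (Nat.lt_of_le_of_lt (Nat.add_le_add_left (Nat.le_pred_of_lt h) a) haN)
  · intro i i' hne
    refine hX _ _ (fun hh => hne ?_)
    have h2 : a + i.val = a + i'.val := congrArg Fin.val hh
    exact Fin.ext (by omega)
  · intro h0 p hp
    by_cases hmem : p ∈ closedRegion (γ.image (C ⟨a,
        Nat.lt_of_le_of_lt (Nat.le_add_right a (t - 1)) haN⟩))
    · left
      exact hclean p hp hmem
    · right
      exact hmem


end CrossingPaper
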